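/- Let P₁,…,P_r be polytopes in ℝ^d such that P = P₁ + ⋯ + P_r is d-dimensional and 0 lies in the interior of P. Then the dual of the Cayley cone associated to P₁,…,P_r is C(P₁,…,P_r)^∨ = ℝ≥0 · conv( { (x, (−min⟨P₁,x⟩, …, −min⟨P_r,x⟩)) : x an extreme point of P* } ∪ { (0,e₁), …, (0,e_r) } ) ⊆ ℝ^d × ℝ^r, where min⟨P_i, x⟩ denotes min_{p ∈ P_i} ⟨p, x⟩. -/

import Mathlib

open Pointwise

noncomputable section

/-- The standard inner product on `n → ℝ`. -/
def dot {n : Type*} [Fintype n] (x y : n → ℝ) : ℝ := ∑ i, x i * y i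

/-- The lattice points of `n → ℝ`: points with integer coordinates. -/
def latt (n : Type*) [Fintype n] : Set (n → ℝ) := {x | ∀ i, ∃ m : ℤ, x i = (m : ℝ)}

/-- Polar dual `S* = {y | ⟨x,y⟩ ≥ -1 ∀ x ∈ S}`. -/
def polarDual {n : Type*} [Fintype n] (S : Set (n → ℝ)) : Set (n → ℝ) :=
  {y | ∀ x ∈ S, -1 ≤ dot x y}

/-- `[S]`: the convex hull of the lattice points of `S`. -/
def latticeHull {n : Type*} [Fintype n] (S : Set (n → ℝ)) : Set (n → ℝ) :=
  convexHull ℝ (S ∩ latt n)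

/-- A polytope: the convex hull of a finite set. -/
def IsPolytope {n : Type*} [Fintype n] (P : Set (n → ℝ)) : Prop :=
  ∃ F : Set (n → ℝ), F.Finite ∧ P = convexHull ℝ F

/-- A lattice polytope: the convex hull of a finite set of lattice points. -/
def IsLatticePolytope {n : Type*} [Fintype n] (P : Set (n → ℝ)) : Prop :=
  ∃ F : Set (n → ℝ), F.Finite ∧ F ⊆ latt n ∧ P = convexHull ℝ F

/-- A full-dimensional polytope `P` with `0` in its interior is Q-reflexive if
`[[P]*] = P*`. -/
def IsQReflexive {n : Type*} [Fintype n] (P : Set (n → ℝ)) : Prop :=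
  IsPolytope P ∧ 0 ∈ interior P ∧ latticeHull (polarDual (latticeHull P)) = polarDual P

/-- A full-dimensional lattice polytope `P` with `0` in its interior is almost reflexive
if `[[P*]*] = P`. -/
def IsAlmostReflexive {n : Type*} [Fintype n] (P : Set (n → ℝ)) : Prop :=
  IsLatticePolytope P ∧ 0 ∈ interior P ∧
    latticeHull (polarDual (latticeHull (polarDual P))) = P

/-- A full-dimensional lattice polytope `P` with `0` in its interior is reflexive
if `P*` is a lattice polytope. -/
def IsReflexive {n : Type*} [Fintype n] (P : Set (n → ℝ)) : Prop :=
  IsLatticePolytope P ∧ 0 ∈ interior P ∧ IsLatticePolytope (polarDual P)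

/-- The cone `ℝ≥0 · S` over a set `S`. -/
def coneOver {n : Type*} [Fintype n] (S : Set (n → ℝ)) : Set (n → ℝ) :=
  {z | ∃ t : ℝ, 0 ≤ t ∧ ∃ x ∈ S, z = t • x}

/-- The dual cone `σ^∨ = {y | ⟨x,y⟩ ≥ 0 ∀ x ∈ σ}`. -/
def dualCone {n : Type*} [Fintype n] (σ : Set (n → ℝ)) : Set (n → ℝ) :=
  {y | ∀ x ∈ σ, 0 ≤ dot x y}

/-- The point `(x, y) ∈ ℝ^d × ℝ^r`. -/
def pairPt {d r : ℕ} (x : Fin d → ℝ) (y : Fin r → ℝ) : (Fin d ⊕ Fin r) → ℝ :=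
  Sum.elim x y

/-- The `j`-th standard basis vector of `ℝ^r`. -/
def stdB {r : ℕ} (j : Fin r) : Fin r → ℝ := fun k => if k = j then 1 else 0

/-- The Cayley cone `C(P₁,…,P_r) = ℝ≥0 · conv((P₁ × {e₁}) ∪ ⋯ ∪ (P_r × {e_r}))`
in `ℝ^d × ℝ^r`. -/
def cayley {d r : ℕ} (P : Fin r → Set (Fin d → ℝ)) : Set ((Fin d ⊕ Fin r) → ℝ) :=
  coneOver (convexHull ℝ (⋃ j, (fun x => pairPt x (stdB j)) '' P j))

open Module Filter


open Module Filter

variable {E : Type*} [NormedAddCommGroup E] [NormedSpace ℝ E] [FiniteDimensional ℝ E]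

set_option maxHeartbeats 1000000 in
lemma support_face {s : Set E} (hs : IsCompact s) (hconv : Convex ℝ s) {p u : E}
    (hp : p ∈ s) (huW : u ∈ vectorSpan ℝ s) (hout : ∀ t : ℝ, 0 < t → p + t • u ∉ s) :
    ∃ F : Set E, IsExtreme ℝ s F ∧ IsCompact F ∧ Convex ℝ F ∧ p ∈ F ∧
      vectorSpan ℝ F < vectorSpan ℝ s := by
  classical
  set W := vectorSpan ℝ s with hW
  obtain ⟨W', hcompl⟩ := Submodule.exists_isCompl W
  -- continuous linear projection onto W
  let πl : E →ₗ[ℝ] E := W.subtype.comp (W.projectionOnto W' hcompl)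
  have hπW : ∀ v ∈ W, πl v = v := fun v hv => by
    simp [πl, Submodule.projectionOnto_apply_left hcompl ⟨v, hv⟩]
  have hπW' : ∀ v ∈ W', πl v = 0 := fun v hv => by
    simp [πl, Submodule.projectionOnto_apply_right hcompl ⟨v, hv⟩]
  have hπc : Continuous πl := πl.continuous_of_finiteDimensional
  -- the sequence of outside points
  have hdiff : ∀ z ∈ s, z - p ∈ W := fun z hz => vsub_mem_vectorSpan ℝ hz hp
  -- separating functionals
  have hsep : ∀ k : ℕ, ∃ g : E →L[ℝ] ℝ, g ∈ Metric.sphere (0 : E →L[ℝ] ℝ) 1 ∧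
      (∀ v ∈ W', g v = 0) ∧
      ∀ z ∈ s, g (p + ((k : ℝ) + 1)⁻¹ • u) ≤ g z := by
    intro k
    have hkpos : (0 : ℝ) < ((k : ℝ) + 1)⁻¹ := by positivity
    obtain ⟨f, c, hfc, hcz⟩ :=
      geometric_hahn_banach_point_closed hconv hs.isClosed (hout _ hkpos)
    -- f' = f ∘ π
    let f' : E →L[ℝ] ℝ := f.comp ⟨πl, hπc⟩
    have hf'sep : ∀ z ∈ s, f' (p + ((k : ℝ) + 1)⁻¹ • u) < f' z := by
      intro z hz
      have h1 : πl (p + ((k : ℝ) + 1)⁻¹ • u) - πl z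
          = (p + ((k : ℝ) + 1)⁻¹ • u) - z := by
        have : (p + ((k : ℝ) + 1)⁻¹ • u) - z = ((k : ℝ) + 1)⁻¹ • u - (z - p) := by abel
        rw [← map_sub, this, map_sub, map_smul, hπW u huW, hπW _ (hdiff z hz)]
      have h2 : f' (p + ((k : ℝ) + 1)⁻¹ • u) - f' z
          = f (p + ((k : ℝ) + 1)⁻¹ • u) - f z := by
        show f (πl _) - f (πl _) = _
        rw [← map_sub, h1, map_sub]
      have := (hfc.trans (hcz z hz))
      linarith
    have hne : f' ≠ 0 := by
      intro h
      have := hf'sep p hp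
      rw [h] at this
      simp at this
    have hnorm : ‖f'‖ ≠ 0 := by simpa using hne
    refine ⟨‖f'‖⁻¹ • f', ?_, ?_, ?_⟩
    · exact mem_sphere_zero_iff_norm.mpr (norm_smul_inv_norm hne)
    · intro v hv
      have : πl v = 0 := hπW' v hv
      show ‖f'‖⁻¹ * f' v = 0
      have : f' v = 0 := by show f (πl v) = 0; rw [this, map_zero]
      rw [this, mul_zero]
    · intro z hz
      have := (hf'sep z hz).le
      show ‖f'‖⁻¹ * _ ≤ ‖f'‖⁻¹ * _
      exact mul_le_mul_of_nonneg_left this (by positivity)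
  choose g hgs hgW' hgsep using hsep
  obtain ⟨f, hfs, φ, hφ, hlim⟩ := (isCompact_sphere (0 : E →L[ℝ] ℝ) 1).tendsto_subseq hgs
  have hev : ∀ v : E, Tendsto (fun j => g (φ j) v) atTop (nhds (f v)) := by
    intro v
    exact ((ContinuousLinearMap.apply ℝ ℝ v).continuous.tendsto f).comp hlim
  -- f p ≤ f z for z in s
  have hmin : ∀ z ∈ s, f p ≤ f z := by
    intro z hz
    have h1 : Tendsto (fun j => g (φ j) (p + ((φ j : ℝ) + 1)⁻¹ • u)) atTop (nhds (f p)) := by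
      have h0 : Tendsto (fun j => g (φ j) (((φ j : ℝ) + 1)⁻¹ • u)) atTop (nhds 0) := by
        have hbnd : ∀ j : ℕ, ‖g (φ j) (((φ j : ℝ) + 1)⁻¹ • u)‖ ≤ ‖u‖ / ((j : ℝ) + 1) := by
          intro j
          have hb : ‖g (φ j) (((φ j : ℝ) + 1)⁻¹ • u)‖ ≤ ‖g (φ j)‖ * ‖((φ j : ℝ) + 1)⁻¹ • u‖ :=
            (g (φ j)).le_opNorm _
          have hn : ‖g (φ j)‖ = 1 := mem_sphere_zero_iff_norm.mp (hgs (φ j))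
          rw [hn, one_mul, norm_smul] at hb
          have hj : ((j : ℝ) + 1) ≤ ((φ j : ℝ) + 1) := by
            have h := hφ.le_apply (x := j)
            have : (j : ℝ) ≤ (φ j : ℝ) := Nat.cast_le.mpr h
            linarith
          calc ‖g (φ j) (((φ j : ℝ) + 1)⁻¹ • u)‖ ≤ ‖((φ j : ℝ) + 1)⁻¹‖ * ‖u‖ := hb
            _ ≤ ((j : ℝ) + 1)⁻¹ * ‖u‖ := by
                rw [Real.norm_eq_abs, abs_of_pos (by positivity)]
                have : ((φ j : ℝ) + 1)⁻¹ ≤ ((j : ℝ) + 1)⁻¹ :=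
                  inv_anti₀ (by positivity) hj
                exact mul_le_mul_of_nonneg_right this (norm_nonneg u)
            _ = ‖u‖ / ((j : ℝ) + 1) := by ring
        have hto : Tendsto (fun j : ℕ => ‖u‖ / ((j : ℝ) + 1)) atTop (nhds 0) := by
          have hg : Tendsto (fun j : ℕ => (j : ℝ) + 1) atTop atTop :=
            tendsto_atTop_add_const_right atTop (1 : ℝ) tendsto_natCast_atTop_atTop
          exact Tendsto.div_atTop tendsto_const_nhds hg
        exact squeeze_zero_norm hbnd hto
      have hadd : Tendsto (fun j => g (φ j) p + g (φ j) (((φ j : ℝ) + 1)⁻¹ • u))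
          atTop (nhds (f p + 0)) := (hev p).add h0
      rw [add_zero] at hadd
      exact hadd.congr (fun j => (map_add (g (φ j)) p _).symm)
    exact le_of_tendsto_of_tendsto' h1 (hev z) (fun j => hgsep (φ j) z hz)
  have hfW' : ∀ v ∈ W', f v = 0 := by
    intro v hv
    have : Tendsto (fun j => g (φ j) v) atTop (nhds 0) := by
      simpa [hgW' _ v hv] using tendsto_const_nhds (α := ℝ) (f := atTop (α := ℕ))
    exact tendsto_nhds_unique (hev v) this
  have hfne : ∃ w ∈ W, f w ≠ 0 := by
    by_contra h
    push_neg at h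
    have : f = 0 := by
      ext v
      have hv : v ∈ W ⊔ W' := by rw [hcompl.sup_eq_top]; trivial
      obtain ⟨a, ha, b, hb, rfl⟩ := Submodule.mem_sup.mp hv
      simp [map_add, h a ha, hfW' b hb]
    have := mem_sphere_zero_iff_norm.mp hfs
    rw [this] at *
    simp_all
  obtain ⟨w, hwW, hwne⟩ := hfne
  refine ⟨{z ∈ s | f z = f p}, ?_, ?_, ?_, ⟨hp, rfl⟩, ?_⟩
  · constructor
    · exact fun z hz => hz.1
    · rintro x₁ h₁ x₂ h₂ z hz ⟨a, b, ha, hb, hab, rfl⟩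
      have e1 : f p ≤ f x₁ := hmin _ h₁
      have e2 : f p ≤ f x₂ := hmin _ h₂
      have e3 : a * f x₁ + b * f x₂ = f p := by
        have := hz.2; rw [map_add, map_smul, map_smul] at this; simpa using this
      have t1 : 0 ≤ a * (f x₁ - f p) := mul_nonneg ha.le (by linarith)
      have t2 : 0 ≤ b * (f x₂ - f p) := mul_nonneg hb.le (by linarith)
      have hsum0 : a * (f x₁ - f p) + b * (f x₂ - f p) = 0 := by linear_combination e3 - f p * hab
      have hz1 : a * (f x₁ - f p) = 0 := by linarith
      have hz2 : b * (f x₂ - f p) = 0 := by linarith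
      have hx1 : f x₁ = f p := by
        rcases mul_eq_zero.mp hz1 with h | h
        · exact absurd h (ne_of_gt ha)
        · linarith
      have hx2 : f x₂ = f p := by
        rcases mul_eq_zero.mp hz2 with h | h
        · exact absurd h (ne_of_gt hb)
        · linarith
      exact ⟨h₁, hx1⟩
  · exact hs.of_isClosed_subset
      (hs.isClosed.inter (isClosed_singleton.preimage f.continuous)) (fun z hz => hz.1)
  · intro z₁ h₁ z₂ h₂ a b ha hb hab
    refine ⟨hconv h₁.1 h₂.1 ha hb hab, ?_⟩
    rw [map_add, map_smul, map_smul, h₁.2, h₂.2]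
    simp only [smul_eq_mul]
    linear_combination f p * hab
  · have hle : vectorSpan ℝ {z ∈ s | f z = f p} ≤ W ⊓ LinearMap.ker (f : E →ₗ[ℝ] ℝ) := by
      rw [vectorSpan_def, Submodule.span_le]
      rintro v ⟨z₁, h₁, z₂, h₂, rfl⟩
      refine ⟨vsub_mem_vectorSpan ℝ h₁.1 h₂.1, ?_⟩
      show f (z₁ - z₂) = 0
      rw [map_sub, h₁.2, h₂.2, sub_self]
    refine lt_of_le_of_lt hle (lt_of_le_of_ne inf_le_left ?_)
    intro hEq
    rw [← hEq] at hwW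
    exact hwne hwW.2

set_option maxHeartbeats 1000000 in
lemma minkowski_aux : ∀ (n : ℕ) (s : Set E), IsCompact s → Convex ℝ s →
    finrank ℝ (vectorSpan ℝ s) ≤ n → s ⊆ convexHull ℝ (s.extremePoints ℝ) := by
  intro n
  induction n with
  | zero =>
    intro s hs hconv hrank x hx
    have hbot : vectorSpan ℝ s = ⊥ :=
      Submodule.finrank_eq_zero.mp (le_antisymm hrank (Nat.zero_le _))
    have hsub : ∀ y ∈ s, y = x := by
      intro y hy
      have h1 : y -ᵥ x ∈ vectorSpan ℝ s := vsub_mem_vectorSpan ℝ hy hx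
      rw [hbot, Submodule.mem_bot, vsub_eq_sub] at h1
      exact sub_eq_zero.mp h1
    refine subset_convexHull ℝ _ (mem_extremePoints.mpr ⟨hx, ?_⟩)
    intro x₁ h₁ x₂ h₂ _
    exact ⟨hsub x₁ h₁, hsub x₂ h₂⟩
  | succ n ih =>
    intro s hs hconv hrank x hx
    by_cases hxe : x ∈ s.extremePoints ℝ
    · exact subset_convexHull ℝ _ hxe
    have hnot := hxe
    rw [mem_extremePoints] at hnot
    push_neg at hnot
    obtain ⟨x₁, h₁, x₂, h₂, hseg, hne12⟩ := hnot hx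
    obtain ⟨ca, cb, hca, hcb, hcab, hxeq⟩ := hseg
    have hx12 : x₁ ≠ x₂ := by
      rintro rfl
      have : x = x₁ := by rw [← hxeq, ← add_smul, hcab, one_smul]
      exact (hne12 this.symm) this.symm
    set u := x₂ - x₁ with hu
    have hu0 : u ≠ 0 := sub_ne_zero.mpr (Ne.symm hx12)
    have huW : u ∈ vectorSpan ℝ s := by
      have := vsub_mem_vectorSpan ℝ h₂ h₁
      rwa [vsub_eq_sub] at this
    set T : Set ℝ := {t : ℝ | x + t • u ∈ s} with hT
    have hT0 : (0 : ℝ) ∈ T := by show x + (0 : ℝ) • u ∈ s; simpa using hx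
    have hTclosed : IsClosed T := by
      have hc : Continuous (fun t : ℝ => x + t • u) :=
        continuous_const.add (continuous_id.smul continuous_const)
      exact hs.isClosed.preimage hc
    obtain ⟨C, hC⟩ := isBounded_iff_forall_norm_le.mp hs.isBounded
    have hupos : (0 : ℝ) < ‖u‖ := norm_pos_iff.mpr hu0
    have hTsub : T ⊆ Set.Icc (-((C + ‖x‖) / ‖u‖)) ((C + ‖x‖) / ‖u‖) := by
      intro t ht
      have h1 : ‖x + t • u‖ ≤ C := hC _ ht
      have h2 : ‖t • u‖ ≤ C + ‖x‖ := by
        have : t • u = (x + t • u) - x := by abel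
        rw [this]
        have := norm_sub_le (x + t • u) x
        linarith
      rw [norm_smul, Real.norm_eq_abs] at h2
      have h3 : |t| ≤ (C + ‖x‖) / ‖u‖ := by
        rw [le_div_iff₀ hupos]; exact h2
      exact abs_le.mp h3
    have hTcomp : IsCompact T := isCompact_Icc.of_isClosed_subset hTclosed hTsub
    have hTne : T.Nonempty := ⟨0, hT0⟩
    set a := sInf T with ha
    set b := sSup T with hb
    have haT : a ∈ T := hTcomp.sInf_mem hTne
    have hbT : b ∈ T := hTcomp.sSup_mem hTne
    have hmemb : -cb ∈ T := by
      show x + (-cb) • u ∈ s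
      have : x + (-cb) • u = x₁ := by
        rw [← hxeq, hu]; match_scalars <;> linarith [hcab]
      rw [this]; exact h₁
    have hmema : ca ∈ T := by
      show x + ca • u ∈ s
      have : x + ca • u = x₂ := by
        rw [← hxeq, hu]; match_scalars <;> linarith [hcab]
      rw [this]; exact h₂
    have haneg : a < 0 := lt_of_le_of_lt (csInf_le hTcomp.bddBelow hmemb) (by linarith)
    have hbpos : 0 < b := lt_of_lt_of_le hca (le_csSup hTcomp.bddAbove hmema)
    have hpout : ∀ t : ℝ, 0 < t → (x + a • u) + t • (-u) ∉ s := by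
      intro t ht hmem
      have hmem' : a - t ∈ T := by
        show x + (a - t) • u ∈ s
        have : x + (a - t) • u = (x + a • u) + t • (-u) := by module
        rw [this]; exact hmem
      have := csInf_le hTcomp.bddBelow hmem'
      rw [← ha] at this
      linarith
    have hqout : ∀ t : ℝ, 0 < t → (x + b • u) + t • u ∉ s := by
      intro t ht hmem
      have hmem' : b + t ∈ T := by
        show x + (b + t) • u ∈ s
        have : x + (b + t) • u = (x + b • u) + t • u := by module
        rw [this]; exact hmem
      have := le_csSup hTcomp.bddAbove hmem'
      rw [← hb] at this
      linarith
    obtain ⟨Fp, hFpext, hFpcomp, hFpconv, hpF, hFplt⟩ :=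
      support_face hs hconv haT ((vectorSpan ℝ s).neg_mem huW) hpout
    obtain ⟨Fq, hFqext, hFqcomp, hFqconv, hqF, hFqlt⟩ :=
      support_face hs hconv hbT huW hqout
    have hprank : finrank ℝ (vectorSpan ℝ Fp) ≤ n := by
      have := Submodule.finrank_lt_finrank_of_lt hFplt
      omega
    have hqrank : finrank ℝ (vectorSpan ℝ Fq) ≤ n := by
      have := Submodule.finrank_lt_finrank_of_lt hFqlt
      omega
    have hphull : (x + a • u) ∈ convexHull ℝ (s.extremePoints ℝ) :=
      convexHull_mono hFpext.extremePoints_subset_extremePoints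
        (ih Fp hFpcomp hFpconv hprank hpF)
    have hqhull : (x + b • u) ∈ convexHull ℝ (s.extremePoints ℝ) :=
      convexHull_mono hFqext.extremePoints_subset_extremePoints
        (ih Fq hFqcomp hFqconv hqrank hqF)
    have hba : 0 < b - a := by linarith
    have hxseg : x ∈ segment ℝ (x + a • u) (x + b • u) := by
      refine ⟨b / (b - a), -a / (b - a), ?_, ?_, ?_, ?_⟩
      · positivity
      · apply div_nonneg <;> linarith
      · field_simp; ring
      · match_scalars <;> field_simp <;> ring
    exact (convex_convexHull ℝ _).segment_subset hphull hqhull hxseg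

section DotLemmas

variable {n : Type*} [Fintype n]

lemma dot_add_left (x y z : n → ℝ) : dot (x + y) z = dot x z + dot y z := by
  simp [dot, add_mul, Finset.sum_add_distrib]

lemma dot_smul_left (c : ℝ) (x z : n → ℝ) : dot (c • x) z = c * dot x z := by
  simp [dot, Finset.mul_sum, mul_assoc]

lemma dot_add_right (x y z : n → ℝ) : dot x (y + z) = dot x y + dot x z := by
  simp [dot, mul_add, Finset.sum_add_distrib]

lemma dot_smul_right (c : ℝ) (x z : n → ℝ) : dot x (c • z) = c * dot x z := by
  simp [dot, Finset.mul_sum]; congr 1; funext i; ring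

lemma dot_zero_left (z : n → ℝ) : dot 0 z = 0 := by simp [dot]

lemma dot_zero_right (x : n → ℝ) : dot x 0 = 0 := by simp [dot]

lemma dot_sum_left {ι : Type*} (t : Finset ι) (f : ι → (n → ℝ)) (x : n → ℝ) :
    dot (∑ i ∈ t, f i) x = ∑ i ∈ t, dot (f i) x := by
  classical
  induction t using Finset.cons_induction with
  | empty => simp [dot]
  | cons a s ha ih => rw [Finset.sum_cons, Finset.sum_cons, dot_add_left, ih]

lemma dot_self_pos {x : n → ℝ} (hx : x ≠ 0) : 0 < dot x x := by
  have h1 : ∀ i, 0 ≤ x i * x i := fun i => mul_self_nonneg _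
  obtain ⟨i, hi⟩ : ∃ i, x i ≠ 0 := by
    by_contra h; push_neg at h; exact hx (funext h)
  exact Finset.sum_pos' (fun i _ => h1 i) ⟨i, Finset.mem_univ i, mul_self_pos.mpr hi⟩

lemma continuous_dot_left (x : n → ℝ) : Continuous fun p : n → ℝ => dot p x := by
  unfold dot
  exact continuous_finset_sum _ fun i _ => (continuous_apply i).mul continuous_const

lemma continuous_dot_right (v : n → ℝ) : Continuous fun z : n → ℝ => dot v z := by
  unfold dot
  exact continuous_finset_sum _ fun i _ => continuous_const.mul (continuous_apply i)

lemma convex_halfspace_dot_right (g : n → ℝ) : Convex ℝ {y : n → ℝ | 0 ≤ dot g y} := by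
  intro y₁ h₁ y₂ h₂ a b ha hb hab
  show 0 ≤ dot g (a • y₁ + b • y₂)
  rw [dot_add_right, dot_smul_right, dot_smul_right]
  exact add_nonneg (mul_nonneg ha h₁) (mul_nonneg hb h₂)

end DotLemmas

lemma dot_stdB {r : ℕ} (j : Fin r) (y : Fin r → ℝ) : dot (stdB j) y = y j := by
  classical
  simp only [dot, stdB, ite_mul, one_mul, zero_mul]
  rw [Finset.sum_ite_eq' Finset.univ j y]
  simp

lemma dot_pairPt_left {d r : ℕ} (p : Fin d → ℝ) (e : Fin r → ℝ) (w : (Fin d ⊕ Fin r) → ℝ) :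
    dot (pairPt p e) w = dot p (fun i => w (Sum.inl i)) + dot e (fun k => w (Sum.inr k)) := by
  simp [dot, pairPt, Fintype.sum_sum_type]

section ConeLemmas

variable {n : Type*} [Fintype n]

lemma mem_coneOver_of_mem {S : Set (n → ℝ)} {x : n → ℝ} (h : x ∈ S) : x ∈ coneOver S :=
  ⟨1, zero_le_one, x, h, (one_smul ℝ x).symm⟩

lemma coneOver_smul_mem {S : Set (n → ℝ)} {t : ℝ} (ht : 0 ≤ t) {z : n → ℝ}
    (h : z ∈ coneOver S) : t • z ∈ coneOver S := by
  obtain ⟨s, hs, v, hv, rfl⟩ := h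
  exact ⟨t * s, mul_nonneg ht hs, v, hv, smul_smul t s v⟩

lemma coneOver_convexHull_add_mem {S : Set (n → ℝ)} {z₁ z₂ : n → ℝ}
    (h₁ : z₁ ∈ coneOver (convexHull ℝ S)) (h₂ : z₂ ∈ coneOver (convexHull ℝ S)) :
    z₁ + z₂ ∈ coneOver (convexHull ℝ S) := by
  obtain ⟨s, hs, u, hu, rfl⟩ := h₁
  obtain ⟨t, ht, v, hv, rfl⟩ := h₂
  rcases eq_or_lt_of_le (add_nonneg hs ht) with hst | hst
  · have hs0 : s = 0 := by linarith
    have ht0 : t = 0 := by linarith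
    refine ⟨0, le_refl 0, u, hu, ?_⟩
    simp [hs0, ht0]
  · refine ⟨s + t, (add_nonneg hs ht), (s / (s + t)) • u + (t / (s + t)) • v, ?_, ?_⟩
    · exact convex_convexHull ℝ S hu hv (div_nonneg hs (by linarith)) (div_nonneg ht (by linarith))
        (by field_simp)
    · rw [smul_add, smul_smul, smul_smul]
      congr 1 <;> · congr 1; field_simp
  
lemma coneOver_convexHull_zero_mem {S : Set (n → ℝ)} (hS : S.Nonempty) :
    (0 : n → ℝ) ∈ coneOver (convexHull ℝ S) := by
  obtain ⟨x, hx⟩ := hS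
  exact ⟨0, le_refl 0, x, subset_convexHull ℝ S hx, (zero_smul ℝ x).symm⟩

lemma coneOver_convexHull_sum_mem {S : Set (n → ℝ)} (hS : S.Nonempty) {ι : Type*}
    (t : Finset ι) (f : ι → (n → ℝ)) (hf : ∀ i ∈ t, f i ∈ coneOver (convexHull ℝ S)) :
    (∑ i ∈ t, f i) ∈ coneOver (convexHull ℝ S) := by
  classical
  induction t using Finset.cons_induction with
  | empty => simpa using coneOver_convexHull_zero_mem hS
  | cons a s ha ih =>
    rw [Finset.sum_cons]
    exact coneOver_convexHull_add_mem (hf a (Finset.mem_cons_self a s))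
      (ih fun i hi => hf i (Finset.mem_cons_of_mem hi))

lemma dualCone_coneOver_convexHull (S : Set (n → ℝ)) :
    dualCone (coneOver (convexHull ℝ S)) = dualCone S := by
  ext w
  constructor
  · intro h x hx
    exact h x (mem_coneOver_of_mem (subset_convexHull ℝ S hx))
  · rintro h z ⟨t, ht, v, hv, rfl⟩
    show 0 ≤ dot (t • v) w
    rw [dot_smul_left]
    refine mul_nonneg ht ?_
    have hsub : S ⊆ {y : n → ℝ | 0 ≤ dot y w} := fun y hy => h y hy
    have hconv : Convex ℝ {y : n → ℝ | 0 ≤ dot y w} := by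
      intro y₁ h₁ y₂ h₂ a b ha hb hab
      show 0 ≤ dot (a • y₁ + b • y₂) w
      rw [dot_add_left, dot_smul_left, dot_smul_left]
      exact add_nonneg (mul_nonneg ha h₁) (mul_nonneg hb h₂)
    exact convexHull_min hsub hconv hv

end ConeLemmas

section Mval

variable {n : Type*} [Fintype n]

def mvalSet (Q : Set (n → ℝ)) (x : n → ℝ) : Set ℝ := {t : ℝ | ∃ p ∈ Q, dot p x = t}

lemma exists_min {Q : Set (n → ℝ)} (hQc : IsCompact Q) (hQ : Q.Nonempty) (x : n → ℝ) :
    ∃ p ∈ Q, dot p x = sInf (mvalSet Q x) ∧ ∀ q ∈ Q, sInf (mvalSet Q x) ≤ dot q x := by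
  obtain ⟨p, hp, hmin⟩ := hQc.exists_isMinOn hQ (continuous_dot_left x).continuousOn
  have hL : IsLeast (mvalSet Q x) (dot p x) := by
    constructor
    · exact ⟨p, hp, rfl⟩
    · rintro s ⟨q, hq, rfl⟩
      exact hmin hq
  have heq : sInf (mvalSet Q x) = dot p x := hL.csInf_eq
  exact ⟨p, hp, heq.symm, fun q hq => heq ▸ hmin hq⟩

lemma mval_le {Q : Set (n → ℝ)} (hQc : IsCompact Q) (hQ : Q.Nonempty) {q : n → ℝ}
    (hq : q ∈ Q) (x : n → ℝ) : sInf (mvalSet Q x) ≤ dot q x := by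
  obtain ⟨p, hp, heq, hlb⟩ := exists_min hQc hQ x
  exact hlb q hq

lemma mval_smul {Q : Set (n → ℝ)} (hQc : IsCompact Q) (hQ : Q.Nonempty) {c : ℝ}
    (hc : 0 < c) (x : n → ℝ) : sInf (mvalSet Q (c • x)) = c * sInf (mvalSet Q x) := by
  obtain ⟨p, hp, heq, hlb⟩ := exists_min hQc hQ x
  have hL : IsLeast (mvalSet Q (c • x)) (c * sInf (mvalSet Q x)) := by
    constructor
    · exact ⟨p, hp, by rw [dot_smul_right, heq]⟩
    · rintro s ⟨q, hq, rfl⟩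
      rw [dot_smul_right]
      exact mul_le_mul_of_nonneg_left (hlb q hq) hc.le
  exact hL.csInf_eq

end Mval

section SumSets

variable {n : Type*} [Fintype n]

lemma isCompact_finsetSum {ι : Type*} (t : Finset ι) (f : ι → Set (n → ℝ))
    (hf : ∀ i ∈ t, IsCompact (f i)) : IsCompact (∑ i ∈ t, f i) := by
  classical
  induction t using Finset.cons_induction with
  | empty =>
    rw [Finset.sum_empty]
    exact isCompact_singleton
  | cons a s ha ih =>
    rw [Finset.sum_cons]
    exact (hf a (Finset.mem_cons_self a s)).add (ih fun i hi => hf i (Finset.mem_cons_of_mem hi))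

lemma convex_finsetSum {ι : Type*} (t : Finset ι) (f : ι → Set (n → ℝ))
    (hf : ∀ i ∈ t, Convex ℝ (f i)) : Convex ℝ (∑ i ∈ t, f i) := by
  classical
  induction t using Finset.cons_induction with
  | empty =>
    rw [Finset.sum_empty]
    exact convex_singleton 0
  | cons a s ha ih =>
    rw [Finset.sum_cons]
    exact (hf a (Finset.mem_cons_self a s)).add (ih fun i hi => hf i (Finset.mem_cons_of_mem hi))

lemma mval_sum {d r : ℕ} (P : Fin r → Set (Fin d → ℝ)) (hc : ∀ i, IsCompact (P i))
    (hne : ∀ i, (P i).Nonempty) (x : Fin d → ℝ) :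
    sInf (mvalSet (∑ i, P i) x) = ∑ i, sInf (mvalSet (P i) x) := by
  classical
  have hsc : IsCompact (∑ i, P i) := isCompact_finsetSum _ _ fun i _ => hc i
  have hsne : (∑ i, P i).Nonempty := by
    refine ⟨∑ i, (hne i).choose, ?_⟩
    rw [Set.mem_finset_sum]
    exact ⟨fun i => (hne i).choose, fun {i} _ => (hne i).choose_spec, rfl⟩
  apply le_antisymm
  · choose pmin hpmin hpeq hplb using fun i => exists_min (hc i) (hne i) x
    have hmem : (∑ i, pmin i) ∈ ∑ i, P i := by
      rw [Set.mem_finset_sum]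
      exact ⟨pmin, fun {i} _ => hpmin i, rfl⟩
    have := mval_le hsc hsne hmem x
    rw [dot_sum_left] at this
    calc sInf (mvalSet (∑ i, P i) x) ≤ ∑ i, dot (pmin i) x := this
      _ = ∑ i, sInf (mvalSet (P i) x) := by
          exact Finset.sum_congr rfl fun i _ => hpeq i
  · obtain ⟨v, hv, hveq, hvlb⟩ := exists_min hsc hsne x
    obtain ⟨g, hg, hgsum⟩ := (Set.mem_finset_sum _ _ _).mp hv
    calc ∑ i, sInf (mvalSet (P i) x) ≤ ∑ i, dot (g i) x :=
          Finset.sum_le_sum fun i _ => mval_le (hc i) (hne i) (hg (Finset.mem_univ i)) x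
      _ = dot (∑ i, g i) x := (dot_sum_left _ _ _).symm
      _ = sInf (mvalSet (∑ i, P i) x) := by rw [hgsum, hveq]

end SumSets

section Polar

variable {n : Type*} [Fintype n] [DecidableEq n]

lemma polarDual_convex (S : Set (n → ℝ)) : Convex ℝ (polarDual S) := by
  intro y₁ h₁ y₂ h₂ a b ha hb hab
  intro x hx
  have e1 := h₁ x hx
  have e2 := h₂ x hx
  show -1 ≤ dot x (a • y₁ + b • y₂)
  rw [dot_add_right, dot_smul_right, dot_smul_right]
  nlinarith

lemma polarDual_isClosed (S : Set (n → ℝ)) : IsClosed (polarDual S) := by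
  have : polarDual S = ⋂ x ∈ S, {y : n → ℝ | -1 ≤ dot x y} := by
    ext y; simp [polarDual, Set.mem_iInter]
  rw [this]
  refine isClosed_biInter fun x _ => ?_
  have : {y : n → ℝ | -1 ≤ dot x y} = (fun y => dot x y) ⁻¹' Set.Ici (-1) := rfl
  rw [this]
  exact isClosed_Ici.preimage (continuous_dot_right x)

lemma interior_ball_subset {S : Set (n → ℝ)} (h0 : (0 : n → ℝ) ∈ interior S) :
    ∃ ε : ℝ, 0 < ε ∧ Metric.ball (0 : n → ℝ) ε ⊆ S := by
  rw [mem_interior_iff_mem_nhds, Metric.mem_nhds_iff] at h0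
  exact h0

lemma dot_single (i : n) (c : ℝ) (y : n → ℝ) : dot (Pi.single i c) y = c * y i := by
  classical
  simp only [dot, Pi.single_apply, ite_mul, zero_mul]
  rw [Finset.sum_ite_eq' Finset.univ i (fun k => c * y k)]
  simp

lemma polarDual_isCompact {S : Set (n → ℝ)} (h0 : (0 : n → ℝ) ∈ interior S) :
    IsCompact (polarDual S) := by
  obtain ⟨ε, hε, hball⟩ := interior_ball_subset h0
  apply Metric.isCompact_of_isClosed_isBounded (polarDual_isClosed S)
  rw [isBounded_iff_forall_norm_le]
  refine ⟨2 / ε, fun y hy => ?_⟩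
  rw [pi_norm_le_iff_of_nonneg (by positivity)]
  intro i
  have htest : ∀ c : ℝ, |c| = ε / 2 → -1 ≤ c * y i := by
    intro c hc
    have hmem : Pi.single i c ∈ Metric.ball (0 : n → ℝ) ε := by
      rw [mem_ball_zero_iff, Pi.norm_single, Real.norm_eq_abs, hc]
      linarith
    have := hy _ (hball hmem)
    rwa [dot_single] at this
  have h1 := htest (ε / 2) (by rw [abs_of_pos (by linarith)])
  have h2 := htest (-(ε / 2)) (by rw [abs_neg, abs_of_pos (by linarith)])
  rw [Real.norm_eq_abs, abs_le]
  have e1 : y i ≤ 2 / ε := by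
    rw [le_div_iff₀ hε]
    linarith
  have e2 : -(2 / ε) ≤ y i := by
    have : -y i ≤ 2 / ε := by
      rw [le_div_iff₀ hε]
      linarith
    linarith
  exact ⟨e2, e1⟩
end Polar

section Phi

def dotL {n : Type*} [Fintype n] (v : n → ℝ) : (n → ℝ) →ₗ[ℝ] ℝ where
  toFun x := dot v x
  map_add' x y := dot_add_right v x y
  map_smul' c x := by simp [dot_smul_right]

def phi {d r : ℕ} (v : Fin r → (Fin d → ℝ)) : (Fin d → ℝ) →ₗ[ℝ] ((Fin d ⊕ Fin r) → ℝ) :=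
  LinearMap.pi (Sum.elim (fun i => LinearMap.proj i) (fun j => -(dotL (v j))))

lemma phi_apply {d r : ℕ} (v : Fin r → (Fin d → ℝ)) (z : Fin d → ℝ) :
    phi v z = pairPt z (fun j => -(dot (v j) z)) := by
  funext i
  cases i with
  | inl i => rfl
  | inr j => rfl

end Phi

lemma mem_dualCone_cayley {d r : ℕ} (P : Fin r → Set (Fin d → ℝ)) (w : (Fin d ⊕ Fin r) → ℝ) :
    w ∈ dualCone (cayley P) ↔
      ∀ j, ∀ p ∈ P j, 0 ≤ dot p (fun i => w (Sum.inl i)) + w (Sum.inr j) := by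
  rw [cayley, show dualCone (coneOver (convexHull ℝ (⋃ j, (fun x => pairPt x (stdB j)) '' P j)))
      = dualCone (⋃ j, (fun x => pairPt x (stdB j)) '' P j) from
        dualCone_coneOver_convexHull _]
  constructor
  · intro h j p hp
    have := h (pairPt p (stdB j)) (Set.mem_iUnion.mpr ⟨j, Set.mem_image_of_mem _ hp⟩)
    rwa [dot_pairPt_left, dot_stdB] at this
  · intro h z hz
    obtain ⟨j, hj⟩ := Set.mem_iUnion.mp hz
    obtain ⟨p, hp, rfl⟩ := hj
    rw [dot_pairPt_left, dot_stdB]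
    exact h j p hp

lemma combo_eq {a b v1 v2 m : ℝ} (ha : 0 < a) (hb : 0 < b) (hab : a + b = 1)
    (h1 : m ≤ v1) (h2 : m ≤ v2) (he : a * v1 + b * v2 = m) : v1 = m ∧ v2 = m := by
  have t1 : 0 ≤ a * (v1 - m) := mul_nonneg ha.le (by linarith)
  have t2 : 0 ≤ b * (v2 - m) := mul_nonneg hb.le (by linarith)
  have hsum0 : a * (v1 - m) + b * (v2 - m) = 0 := by linear_combination he - m * hab
  constructor
  · rcases mul_eq_zero.mp (show a * (v1 - m) = 0 by linarith) with h | h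
    · exact absurd h (ne_of_gt ha)
    · linarith
  · rcases mul_eq_zero.mp (show b * (v2 - m) = 0 by linarith) with h | h
    · exact absurd h (ne_of_gt hb)
    · linarith


/-- Let `P₁,…,P_r` be polytopes in `ℝ^d` such that `P = P₁ + ⋯ + P_r` is
`d`-dimensional with `0` in its interior. Then the dual of the Cayley cone is
`C(P₁,…,P_r)^∨ = ℝ≥0 · conv({(x, (−min⟨P₁,x⟩,…,−min⟨P_r,x⟩)) : x extreme point of P*}
∪ {(0,e₁),…,(0,e_r)})`. -/
theorem dual_cayley_cone {d r : ℕ} (hd : 0 < d) (P : Fin r → Set (Fin d → ℝ))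
    (hpoly : ∀ i, IsPolytope (P i)) (h0 : (0 : Fin d → ℝ) ∈ interior (∑ i, P i)) :
    dualCone (cayley P) =
      coneOver (convexHull ℝ
        ({z : (Fin d ⊕ Fin r) → ℝ | ∃ x ∈ Set.extremePoints ℝ (polarDual (∑ i, P i)),
            z = pairPt x (fun i => -sInf {t : ℝ | ∃ p ∈ P i, dot p x = t})} ∪
          ⋃ j, {pairPt 0 (stdB j)})) := by
  classical
  have hPc : ∀ i, IsCompact (P i) := fun i => by
    obtain ⟨F, hF, hPF⟩ := hpoly i
    rw [hPF]; exact hF.isCompact_convexHull ℝ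
  have hPconv : ∀ i, Convex ℝ (P i) := fun i => by
    obtain ⟨F, hF, hPF⟩ := hpoly i
    rw [hPF]; exact convex_convexHull ℝ F
  have hPbc : IsCompact (∑ i, P i) := isCompact_finsetSum _ _ fun i _ => hPc i
  have h0P : (0 : Fin d → ℝ) ∈ ∑ i, P i := interior_subset h0
  have hPbne : (∑ i, P i).Nonempty := ⟨0, h0P⟩
  have hPne : ∀ i, (P i).Nonempty := by
    obtain ⟨g, hg, -⟩ := (Set.mem_finset_sum _ _ _).mp h0P
    exact fun i => ⟨g i, hg (Finset.mem_univ i)⟩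
  have hQconv : Convex ℝ (polarDual (∑ i, P i)) := polarDual_convex _
  have hQcomp : IsCompact (polarDual (∑ i, P i)) := polarDual_isCompact h0
  have hr : 0 < r := by
    rcases Nat.eq_zero_or_pos r with hr0 | hr
    · exfalso
      subst hr0
      rw [Finset.univ_eq_empty, Finset.sum_empty] at h0
      have h0' : (0 : Fin d → ℝ) ∈ interior ({0} : Set (Fin d → ℝ)) := h0
      obtain ⟨ε, hε, hball⟩ := interior_ball_subset h0'
      have hmem : Pi.single (⟨0, hd⟩ : Fin d) (ε / 2) ∈ Metric.ball (0 : Fin d → ℝ) ε := by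
        rw [mem_ball_zero_iff, Pi.norm_single, Real.norm_eq_abs, abs_of_pos (by linarith)]
        linarith
      have := hball hmem
      rw [Set.mem_singleton_iff] at this
      have := congrFun this ⟨0, hd⟩
      rw [Pi.single_eq_same] at this
      simp at this
      linarith
    · exact hr
  set SA : Set ((Fin d ⊕ Fin r) → ℝ) :=
    {z | ∃ x ∈ Set.extremePoints ℝ (polarDual (∑ i, P i)),
        z = pairPt x (fun i => -sInf {t : ℝ | ∃ p ∈ P i, dot p x = t})} with hSA
  set SS : Set ((Fin d ⊕ Fin r) → ℝ) := SA ∪ ⋃ j, {pairPt 0 (stdB j)} with hSS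
  have hSSstd : ∀ j : Fin r, pairPt 0 (stdB j) ∈ SS :=
    fun j => Or.inr (Set.mem_iUnion.mpr ⟨j, rfl⟩)
  have hSSne : SS.Nonempty := ⟨pairPt 0 (stdB ⟨0, hr⟩), hSSstd _⟩
  apply Set.Subset.antisymm
  · -- hard direction
    intro w hw
    have hineq := (mem_dualCone_cayley P w).mp hw
    by_cases hx0 : (fun i => w (Sum.inl i)) = 0
    · have hy : ∀ j, 0 ≤ w (Sum.inr j) := by
        intro j
        obtain ⟨p, hp⟩ := hPne j
        have := hineq j p hp
        rwa [hx0, dot_zero_right, zero_add] at this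
      have hrep : w = ∑ j, w (Sum.inr j) • pairPt 0 (stdB j) := by
        funext i
        rw [Finset.sum_apply]
        cases i with
        | inl i =>
          have h1 : w (Sum.inl i) = 0 := congrFun hx0 i
          simp [h1, pairPt]
        | inr k =>
          simp only [Pi.smul_apply, smul_eq_mul, pairPt, Sum.elim_inr, stdB, mul_ite,
            mul_one, mul_zero]
          rw [Finset.sum_ite_eq Finset.univ k (fun j => w (Sum.inr j))]
          simp
      rw [hrep]
      exact coneOver_convexHull_sum_mem hSSne _ _ fun j _ =>
        coneOver_smul_mem (hy j)
          (mem_coneOver_of_mem (subset_convexHull ℝ _ (hSSstd j)))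
    · set xx : Fin d → ℝ := fun i => w (Sum.inl i) with hxx
      have hxne : xx ≠ 0 := hx0
      obtain ⟨ε, hε, hball⟩ := interior_ball_subset h0
      have hm_neg : sInf (mvalSet (∑ i, P i) xx) < 0 := by
        have hnx : 0 < ‖xx‖ := norm_pos_iff.mpr hxne
        set c : ℝ := -(ε / 2) / ‖xx‖ with hc
        have hcneg : c < 0 := div_neg_of_neg_of_pos (by linarith) hnx
        have hmem : c • xx ∈ ∑ i, P i := by
          apply hball
          rw [mem_ball_zero_iff, norm_smul, Real.norm_eq_abs, abs_of_neg hcneg, hc]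
          rw [neg_div, neg_neg, div_mul_cancel₀ _ (ne_of_gt hnx)]
          linarith
        have hle := mval_le hPbc hPbne hmem xx
        rw [dot_smul_left] at hle
        have := mul_neg_of_neg_of_pos hcneg (dot_self_pos hxne)
        linarith
      set m := sInf (mvalSet (∑ i, P i) xx) with hm
      have ht : 0 < -m := by linarith
      have htne : -m ≠ 0 := ne_of_gt ht
      set x' : Fin d → ℝ := (-m)⁻¹ • xx with hx'
      have hmx' : ∀ j, sInf (mvalSet (P j) x') = (-m)⁻¹ * sInf (mvalSet (P j) xx) := by
        intro j
        rw [hx']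
        exact mval_smul (hPc j) (hPne j) (inv_pos.mpr ht) xx
      have hinvm : (-m)⁻¹ * m = -1 := by
        have h1 : (-m)⁻¹ * m = -((-m)⁻¹ * (-m)) := by ring
        rw [h1, inv_mul_cancel₀ htne]
      have hmPbx' : sInf (mvalSet (∑ i, P i) x') = -1 := by
        rw [hx', mval_smul hPbc hPbne (inv_pos.mpr ht) xx, ← hm, hinvm]
      have hx'Q : x' ∈ polarDual (∑ i, P i) := by
        intro p hp
        have h1 : m ≤ dot p xx := hm ▸ mval_le hPbc hPbne hp xx
        show -1 ≤ dot p x'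
        rw [hx', dot_smul_right, ← hinvm]
        exact mul_le_mul_of_nonneg_left h1 (inv_pos.mpr ht).le
      obtain ⟨v, hvPb, hvmin, hvlb⟩ := exists_min hPbc hPbne x'
      have hvm1 : dot v x' = -1 := by rw [hvmin, hmPbx']
      obtain ⟨vj, hvj, hvsum⟩ := (Set.mem_finset_sum _ _ _).mp hvPb
      set Ff : Set (Fin d → ℝ) := {z ∈ polarDual (∑ i, P i) | dot v z = -1} with hFf
      have hvQ : ∀ z ∈ polarDual (∑ i, P i), -1 ≤ dot v z := fun z hz => hz v hvPb
      have hx'F : x' ∈ Ff := ⟨hx'Q, hvm1⟩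
      have hFfsubQ : Ff ⊆ polarDual (∑ i, P i) := fun z hz => hz.1
      have hFfcomp : IsCompact Ff := by
        refine hQcomp.of_isClosed_subset ?_ hFfsubQ
        have hFeq : Ff = polarDual (∑ i, P i) ∩ (fun z => dot v z) ⁻¹' {(-1 : ℝ)} := rfl
        rw [hFeq]
        exact (polarDual_isClosed _).inter (isClosed_singleton.preimage (continuous_dot_right v))
      have hFfconv : Convex ℝ Ff := by
        intro z₁ h₁ z₂ h₂ a b ha hb hab
        refine ⟨hQconv h₁.1 h₂.1 ha hb hab, ?_⟩
        rw [dot_add_right, dot_smul_right, dot_smul_right, h₁.2, h₂.2]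
        linarith
      have hFfext : IsExtreme ℝ (polarDual (∑ i, P i)) Ff := by
        constructor
        · exact hFfsubQ
        · rintro z₁ h₁ z₂ h₂ z hzF ⟨a, b, ha, hb, hab, rfl⟩
          have he : a * dot v z₁ + b * dot v z₂ = -1 := by
            have h2 := hzF.2
            rwa [dot_add_right, dot_smul_right, dot_smul_right] at h2
          obtain ⟨e1, e2⟩ := combo_eq ha hb hab (hvQ z₁ h₁) (hvQ z₂ h₂) he
          exact ⟨h₁, e1⟩
      have hmz : ∀ z ∈ Ff, ∀ j, sInf (mvalSet (P j) z) = dot (vj j) z := by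
        intro z hz
        have hmPbz : sInf (mvalSet (∑ i, P i) z) = -1 := by
          apply le_antisymm
          · rw [← hz.2]; exact mval_le hPbc hPbne hvPb z
          · obtain ⟨p0, hp0, hpeq, -⟩ := exists_min hPbc hPbne z
            rw [← hpeq]; exact hz.1 p0 hp0
        have hsum1 : ∑ j, sInf (mvalSet (P j) z) = -1 := by
          rw [← mval_sum P hPc hPne z]; exact hmPbz
        have hsum2 : ∑ j, dot (vj j) z = -1 := by
          rw [← dot_sum_left, hvsum]; exact hz.2
        have hle : ∀ j ∈ Finset.univ, sInf (mvalSet (P j) z) ≤ dot (vj j) z :=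
          fun j _ => mval_le (hPc j) (hPne j) (hvj (Finset.mem_univ j)) z
        have hall := (Finset.sum_eq_sum_iff_of_le hle).mp (by rw [hsum1, hsum2])
        exact fun j => hall j (Finset.mem_univ j)
      have hhull := minkowski_aux (finrank ℝ (vectorSpan ℝ Ff)) Ff hFfcomp hFfconv le_rfl hx'F
      rw [convexHull_eq] at hhull
      obtain ⟨ι, tt, wt, zt, hw0, hw1, hzt, hcm⟩ := hhull
      rw [Finset.centerMass_eq_of_sum_1 _ _ hw1] at hcm
      have hphiS : ∀ k ∈ tt, phi vj (zt k) ∈ SA := by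
        intro k hk
        rw [hSA]
        refine ⟨zt k, hFfext.extremePoints_subset_extremePoints (hzt k hk), ?_⟩
        have hfun : (fun j => -(dot (vj j) (zt k)))
            = (fun i => -sInf {t : ℝ | ∃ p ∈ P i, dot p (zt k) = t}) := by
          funext j
          rw [← hmz (zt k) (extremePoints_subset (hzt k hk)) j]
          rfl
        rw [phi_apply, hfun]
      have hphihull : phi vj x' ∈ convexHull ℝ SS := by
        have hxsum : phi vj x' = ∑ k ∈ tt, wt k • phi vj (zt k) := by
          rw [← hcm, map_sum]
          exact Finset.sum_congr rfl fun k _ => by rw [map_smul]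
        rw [hxsum]
        exact (convex_convexHull ℝ SS).sum_mem hw0 hw1
          (fun k hk => subset_convexHull ℝ SS (Or.inl (hphiS k hk)))
      have hbj : ∀ j, 0 ≤ w (Sum.inr j) + sInf (mvalSet (P j) xx) := by
        intro j
        obtain ⟨p0, hp0, hpeq, -⟩ := exists_min (hPc j) (hPne j) xx
        have h2 := hineq j p0 hp0
        rw [hpeq] at h2
        linarith
      have hrep : w = (-m) • phi vj x' +
          ∑ j, (w (Sum.inr j) + sInf (mvalSet (P j) xx)) • pairPt 0 (stdB j) := by
        funext i
        rw [Pi.add_apply, Pi.smul_apply, smul_eq_mul, Finset.sum_apply]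
        cases i with
        | inl i =>
          have h1 : phi vj x' (Sum.inl i) = (-m)⁻¹ * xx i := by
            rw [phi_apply]
            show x' i = (-m)⁻¹ * xx i
            rw [hx']
            rfl
          have h2 : ∀ j ∈ Finset.univ,
              ((w (Sum.inr j) + sInf (mvalSet (P j) xx)) • pairPt 0 (stdB j)) (Sum.inl i)
                = 0 := by
            intro j _
            simp [pairPt]
          rw [h1, Finset.sum_congr rfl h2, Finset.sum_const_zero, add_zero]
          have h3 : w (Sum.inl i) = xx i := (congrFun hxx i).symm
          rw [h3, ← mul_assoc, mul_inv_cancel₀ htne, one_mul]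
        | inr k =>
          have h1 : phi vj x' (Sum.inr k) = -((-m)⁻¹ * sInf (mvalSet (P k) xx)) := by
            rw [phi_apply]
            show -(dot (vj k) x') = _
            rw [← hmz x' hx'F k, hmx' k]
          have h2 : ∀ j, ((w (Sum.inr j) + sInf (mvalSet (P j) xx)) • pairPt (0 : Fin d → ℝ) (stdB j))
              (Sum.inr k) = (w (Sum.inr j) + sInf (mvalSet (P j) xx)) * stdB j k := by
            intro j
            simp [pairPt]
          rw [h1]
          simp only [h2, stdB, mul_ite, mul_one, mul_zero]
          rw [Finset.sum_ite_eq Finset.univ k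
            (fun j => w (Sum.inr j) + sInf (mvalSet (P j) xx))]
          simp only [Finset.mem_univ, if_true]
          have hm0 : m ≠ 0 := by intro hh; rw [hh] at ht; simp at ht
          field_simp
          ring
      rw [hrep]
      exact coneOver_convexHull_add_mem
        (coneOver_smul_mem ht.le (mem_coneOver_of_mem hphihull))
        (coneOver_convexHull_sum_mem hSSne _ _ fun j _ =>
          coneOver_smul_mem (hbj j)
            (mem_coneOver_of_mem (subset_convexHull ℝ _ (hSSstd j))))
  · -- easy direction
    rintro w ⟨t, ht, v, hv, rfl⟩
    refine (mem_dualCone_cayley P _).mpr ?_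
    intro j p hp
    have hv' : 0 ≤ dot (pairPt p (stdB j)) v := by
      refine convexHull_min ?_ (convex_halfspace_dot_right (pairPt p (stdB j))) hv
      rintro z (⟨e, he, rfl⟩ | hz)
      · rw [Set.mem_setOf_eq]
        rw [dot_pairPt_left, dot_stdB]
        have hle := mval_le (hPc j) (hPne j) hp e
        show 0 ≤ dot p (fun i => pairPt e _ (Sum.inl i)) + pairPt e _ (Sum.inr j)
        have h1 : dot p (fun i => pairPt e (fun i => -sInf {t : ℝ | ∃ p ∈ P i, dot p e = t})
            (Sum.inl i)) = dot p e := rfl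
        have h2 : pairPt e (fun i => -sInf {t : ℝ | ∃ p ∈ P i, dot p e = t}) (Sum.inr j)
            = -sInf (mvalSet (P j) e) := rfl
        rw [h1, h2]
        linarith
      · obtain ⟨j', hj'⟩ := Set.mem_iUnion.mp hz
        rw [Set.mem_singleton_iff] at hj'
        subst hj'
        rw [Set.mem_setOf_eq, dot_pairPt_left, dot_stdB]
        have h1 : dot p (fun i => pairPt (0 : Fin d → ℝ) (stdB j') (Sum.inl i)) = 0 :=
          dot_zero_right p
        rw [h1, zero_add]
        show 0 ≤ stdB j' j
        unfold stdB
        split <;> norm_num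
    have hrw : dot p (fun i => (t • v) (Sum.inl i)) + (t • v) (Sum.inr j)
        = dot (pairPt p (stdB j)) (t • v) := by
      rw [dot_pairPt_left, dot_stdB]
    rw [hrw, dot_smul_right]
    exact mul_nonneg ht hv'
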